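/- Let (aᵢ)_{i≥1} be a nondecreasing sequence of positive reals with Σᵢ 1/aᵢ² < ∞, define μ(θ) = Σᵢ 1/(aᵢ²+2θ) and I(θ) = ½·Σᵢ log(1+2θ/aᵢ²) − θ·μ(θ) for θ > 0, let μ⁻¹ be the inverse of μ, and set ρ(s) = 1/μ⁻¹(s). Then for every x ∈ ℝ, exp( I(μ⁻¹(s)) − I(μ⁻¹(s + x·ρ(s))) − x ) → 1 as s → 0⁺. -/

import Mathlib

open Filter Set Real

namespace ExpIDiffAux

lemma denom_pos {a : ℕ → ℝ} (hapos : ∀ i, 0 < a i) {θ : ℝ} (hθ : 0 ≤ θ) (i : ℕ) :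
    0 < (a i) ^ 2 + 2 * θ := by
  have := hapos i; positivity

lemma summable_h {a : ℕ → ℝ} (hapos : ∀ i, 0 < a i)
    (hasum : Summable (fun i => 1 / (a i) ^ 2)) {θ : ℝ} (hθ : 0 ≤ θ) :
    Summable (fun i => 1 / ((a i) ^ 2 + 2 * θ)) := by
  refine Summable.of_nonneg_of_le (fun i => by have := denom_pos hapos hθ i; positivity)
    (fun i => ?_) hasum
  have h1 := denom_pos hapos hθ i
  have h2 : (0:ℝ) < (a i) ^ 2 := by have := hapos i; positivity
  apply one_div_le_one_div_of_le h2
  linarith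

lemma summable_L {a : ℕ → ℝ} (hapos : ∀ i, 0 < a i)
    (hasum : Summable (fun i => 1 / (a i) ^ 2)) {θ : ℝ} (hθ : 0 ≤ θ) :
    Summable (fun i => Real.log (1 + 2 * θ / (a i) ^ 2)) := by
  have hsum2 : Summable (fun i => 2 * θ * (1 / (a i) ^ 2)) := hasum.mul_left _
  refine Summable.of_nonneg_of_le (fun i => ?_) (fun i => ?_) hsum2
  · apply Real.log_nonneg
    have h2 : (0:ℝ) < (a i) ^ 2 := by have := hapos i; positivity
    have : 0 ≤ 2 * θ / (a i) ^ 2 := by positivity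
    linarith
  · have h2 : (0:ℝ) < (a i) ^ 2 := by have := hapos i; positivity
    have harg : (0:ℝ) < 1 + 2 * θ / (a i) ^ 2 := by positivity
    have hl := Real.log_le_sub_one_of_pos harg
    have heq : 2 * θ * (1 / (a i) ^ 2) = 2 * θ / (a i) ^ 2 := by ring
    linarith

lemma hasDerivAt_u (A c : ℝ) (hA : 0 < A) {θ : ℝ} (hθ : 0 ≤ θ) :
    HasDerivAt (fun θ => (1/2) * Real.log (1 + 2*θ/A) - θ/(A+2*θ) + c * (1/(A+2*θ)))
      (2*(θ - c)/(A+2*θ)^2) θ := by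
  have hden : (0:ℝ) < A + 2*θ := by positivity
  have harg : (0:ℝ) < 1 + 2*θ/A := by positivity
  have h1 : HasDerivAt (fun θ : ℝ => 1 + 2*θ/A) (2/A) θ := by
    have h := ((hasDerivAt_id θ).const_mul (2/A)).const_add 1
    have heq : (fun θ : ℝ => 1 + 2/A * id θ) = (fun θ : ℝ => 1 + 2*θ/A) := by
      funext y; simp [id]; ring
    rw [heq] at h
    simpa using h
  have h2 : HasDerivAt (fun θ : ℝ => (1/2) * Real.log (1 + 2*θ/A)) ((1/2) * ((2/A)/(1+2*θ/A))) θ :=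
    (h1.log harg.ne').const_mul _
  have h3 : HasDerivAt (fun θ : ℝ => A + 2*θ) 2 θ := by
    have h := ((hasDerivAt_id θ).const_mul 2).const_add A
    have heq : (fun θ : ℝ => A + 2 * id θ) = (fun θ : ℝ => A + 2*θ) := by
      funext y; simp [id]
    rw [heq] at h; simpa using h
  have h4 : HasDerivAt (fun θ : ℝ => θ/(A+2*θ)) ((1*(A+2*θ) - θ*2)/(A+2*θ)^2) θ :=
    (hasDerivAt_id θ).div h3 hden.ne'
  have h5 : HasDerivAt (fun θ : ℝ => c * (1/(A+2*θ))) (c * ((0*(A+2*θ) - 1*2)/(A+2*θ)^2)) θ :=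
    ((hasDerivAt_const θ 1).div h3 hden.ne').const_mul c
  have h := (h2.sub h4).add h5
  refine h.congr_deriv ?_
  field_simp
  ring

noncomputable def gg (A θ : ℝ) : ℝ := (1/2) * Real.log (1 + 2*θ/A) - θ/(A+2*θ)

lemma u_mvt (A c : ℝ) (hA : 0 < A) {α β : ℝ} (hα : 0 < α) (hab : α < β) :
    ∃ ξ ∈ Set.Ioo α β,
      (gg A β + c * (1/(A+2*β))) - (gg A α + c * (1/(A+2*α)))
        = 2*(ξ - c)/(A+2*ξ)^2 * (β - α) := by
  have hcont : ContinuousOn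
      (fun θ => (1/2) * Real.log (1 + 2*θ/A) - θ/(A+2*θ) + c * (1/(A+2*θ))) (Set.Icc α β) :=
    fun y hy =>
      (hasDerivAt_u A c hA (le_of_lt (lt_of_lt_of_le hα hy.1))).continuousAt.continuousWithinAt
  obtain ⟨ξ, hξ, heq⟩ := exists_hasDerivAt_eq_slope _ (fun θ => 2*(θ - c)/(A+2*θ)^2) hab hcont
    (fun y hy => hasDerivAt_u A c hA (le_of_lt (lt_trans hα hy.1)))
  refine ⟨ξ, hξ, ?_⟩
  have hne : β - α ≠ 0 := by linarith
  rw [eq_div_iff hne] at heq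
  unfold gg
  linarith [heq]

lemma g_sandwich (A : ℝ) (hA : 0 < A) {α β : ℝ} (hα : 0 < α) (hab : α ≤ β) :
    α * (1/(A+2*α) - 1/(A+2*β)) ≤ gg A β - gg A α ∧
      gg A β - gg A α ≤ β * (1/(A+2*α) - 1/(A+2*β)) := by
  rcases eq_or_lt_of_le hab with rfl | hlt
  · simp
  constructor
  · obtain ⟨ξ, hξ, heq⟩ := u_mvt A α hA hα hlt
    have h1 : 0 ≤ 2*(ξ - α)/(A+2*ξ)^2 * (β - α) :=
      mul_nonneg (div_nonneg (by linarith [hξ.1]) (sq_nonneg _)) (by linarith)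
    nlinarith [heq, h1]
  · obtain ⟨ξ, hξ, heq⟩ := u_mvt A β hA hα hlt
    have h1 : 2*(ξ - β)/(A+2*ξ)^2 * (β - α) ≤ 0 :=
      mul_nonpos_of_nonpos_of_nonneg
        (div_nonpos_of_nonpos_of_nonneg (by linarith [hξ.2]) (sq_nonneg _)) (by linarith)
    nlinarith [heq, h1]

lemma summable_gg {a : ℕ → ℝ} (hapos : ∀ i, 0 < a i)
    (hasum : Summable (fun i => 1 / (a i) ^ 2)) {θ : ℝ} (hθ : 0 ≤ θ) :
    Summable (fun i => gg ((a i)^2) θ) := by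
  have h1 := (summable_L hapos hasum hθ).mul_left (1/2 : ℝ)
  have h2 := (summable_h hapos hasum hθ).mul_left θ
  refine (h1.sub h2).congr (fun i => ?_)
  unfold gg
  rw [mul_one_div]

lemma I_eq_tsum_gg {a : ℕ → ℝ} (hapos : ∀ i, 0 < a i)
    (hasum : Summable (fun i => 1 / (a i) ^ 2)) {μ I : ℝ → ℝ}
    (hμ : ∀ θ : ℝ, μ θ = ∑' i : ℕ, 1 / ((a i) ^ 2 + 2 * θ))
    (hI : ∀ θ : ℝ, I θ =
      (1 / 2) * (∑' i : ℕ, Real.log (1 + 2 * θ / (a i) ^ 2)) - θ * μ θ)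
    {θ : ℝ} (hθ : 0 ≤ θ) : I θ = ∑' i, gg ((a i)^2) θ := by
  rw [hI θ, hμ θ, ← tsum_mul_left, ← tsum_mul_left,
    ← Summable.tsum_sub ((summable_L hapos hasum hθ).mul_left _) ((summable_h hapos hasum hθ).mul_left _)]
  refine tsum_congr (fun i => ?_)
  unfold gg
  rw [mul_one_div]

lemma mu_anti {a : ℕ → ℝ} (hapos : ∀ i, 0 < a i)
    (hasum : Summable (fun i => 1 / (a i) ^ 2)) {μ : ℝ → ℝ}
    (hμ : ∀ θ : ℝ, μ θ = ∑' i : ℕ, 1 / ((a i) ^ 2 + 2 * θ))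
    {α β : ℝ} (hα : 0 < α) (hab : α ≤ β) : μ β ≤ μ α := by
  rw [hμ α, hμ β]
  refine Summable.tsum_le_tsum (fun i => ?_) (summable_h hapos hasum (by linarith))
    (summable_h hapos hasum hα.le)
  have h2 : (0:ℝ) < (a i)^2 := by have := hapos i; positivity
  apply one_div_le_one_div_of_le (by linarith)
  linarith

lemma I_sandwich {a : ℕ → ℝ} (hapos : ∀ i, 0 < a i)
    (hasum : Summable (fun i => 1 / (a i) ^ 2)) {μ I : ℝ → ℝ}
    (hμ : ∀ θ : ℝ, μ θ = ∑' i : ℕ, 1 / ((a i) ^ 2 + 2 * θ))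
    (hI : ∀ θ : ℝ, I θ =
      (1 / 2) * (∑' i : ℕ, Real.log (1 + 2 * θ / (a i) ^ 2)) - θ * μ θ)
    {α β : ℝ} (hα : 0 < α) (hab : α ≤ β) :
    α * (μ α - μ β) ≤ I β - I α ∧ I β - I α ≤ β * (μ α - μ β) := by
  have hβ : (0:ℝ) < β := lt_of_lt_of_le hα hab
  have hhα := summable_h hapos hasum hα.le
  have hhβ := summable_h hapos hasum hβ.le
  have hgα := summable_gg hapos hasum hα.le
  have hgβ := summable_gg hapos hasum hβ.le
  have hIdiff : I β - I α = ∑' i, (gg ((a i)^2) β - gg ((a i)^2) α) := by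
    rw [I_eq_tsum_gg hapos hasum hμ hI hβ.le, I_eq_tsum_gg hapos hasum hμ hI hα.le,
      Summable.tsum_sub hgβ hgα]
  have hμdiff : ∀ c : ℝ, c * (μ α - μ β) = ∑' i,
      c * (1/((a i)^2+2*α) - 1/((a i)^2+2*β)) := fun c => by
    rw [hμ α, hμ β, ← Summable.tsum_sub hhα hhβ, ← tsum_mul_left]
  have hsummand : ∀ i : ℕ, 0 < ((a i)^2 : ℝ) := fun i => by have := hapos i; positivity
  constructor
  · rw [hIdiff, hμdiff α]
    exact Summable.tsum_le_tsum (fun i => (g_sandwich _ (hsummand i) hα hab).1)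
      ((hhα.sub hhβ).mul_left α) (hgβ.sub hgα)
  · rw [hIdiff, hμdiff β]
    exact Summable.tsum_le_tsum (fun i => (g_sandwich _ (hsummand i) hα hab).2)
      (hgβ.sub hgα) ((hhα.sub hhβ).mul_left β)

lemma tendsto_term (A b c : ℝ) (hA : 0 < A) (hb : 0 < b) (hbc : b < c) :
    Tendsto (fun θ : ℝ => θ * (1/(A+2*(b*θ)) - 1/(A+2*(c*θ)))) atTop
      (nhds ((c-b)/(2*b*c))) := by
  have hc : 0 < c := lt_trans hb hbc
  have hAθ : Tendsto (fun θ : ℝ => A/θ) atTop (nhds 0) :=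
    Tendsto.div_atTop tendsto_const_nhds tendsto_id
  have h1 : Tendsto (fun θ : ℝ => 2*(c-b)/((A/θ+2*b)*(A/θ+2*c))) atTop
      (nhds (2*(c-b)/((0+2*b)*(0+2*c)))) := by
    apply Tendsto.div tendsto_const_nhds
      (((hAθ.add_const (2*b)).mul (hAθ.add_const (2*c))))
    positivity
  have heq : 2*(c-b)/(((0:ℝ)+2*b)*(0+2*c)) = (c-b)/(2*b*c) := by
    field_simp; ring
  rw [heq] at h1
  refine h1.congr' ?_
  filter_upwards [eventually_gt_atTop (0:ℝ)] with θ hθ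
  have d1 : (0:ℝ) < A + 2*(b*θ) := by positivity
  have d2 : (0:ℝ) < A + 2*(c*θ) := by positivity
  field_simp
  ring

lemma tendsto_L {a : ℕ → ℝ} (hapos : ∀ i, 0 < a i)
    (hasum : Summable (fun i => 1 / (a i) ^ 2)) {μ : ℝ → ℝ}
    (hμ : ∀ θ : ℝ, μ θ = ∑' i : ℕ, 1 / ((a i) ^ 2 + 2 * θ))
    {b c : ℝ} (hb : 0 < b) (hbc : b < c) :
    Tendsto (fun θ : ℝ => θ * (μ (b*θ) - μ (c*θ))) atTop atTop := by
  have hc : 0 < c := lt_trans hb hbc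
  have hK : (0:ℝ) < (c-b)/(2*b*c) := by
    apply div_pos (by linarith); positivity
  rw [tendsto_atTop]
  intro M
  obtain ⟨N, hN⟩ := exists_nat_gt (M / ((c-b)/(2*b*c)))
  have hNK : M < N * ((c-b)/(2*b*c)) := by
    rw [div_lt_iff₀ hK] at hN; linarith
  have hsum : Tendsto (fun θ : ℝ => ∑ i ∈ Finset.range N,
      θ * (1/((a i)^2+2*(b*θ)) - 1/((a i)^2+2*(c*θ)))) atTop
      (nhds (∑ i ∈ Finset.range N, (c-b)/(2*b*c))) := by
    apply tendsto_finset_sum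
    intro i _
    exact tendsto_term _ b c (by have := hapos i; positivity) hb hbc
  rw [Finset.sum_const, Finset.card_range, nsmul_eq_mul] at hsum
  filter_upwards [hsum.eventually (eventually_gt_nhds hNK), eventually_gt_atTop (0:ℝ)]
    with θ hθ1 hθ2
  have hbθ : (0:ℝ) ≤ b*θ := by positivity
  have hcθ : (0:ℝ) ≤ c*θ := by positivity
  have hsb := summable_h hapos hasum hbθ
  have hsc := summable_h hapos hasum hcθ
  have hdiff_nonneg : ∀ i : ℕ, 0 ≤ θ * (1/((a i)^2+2*(b*θ)) - 1/((a i)^2+2*(c*θ))) := by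
    intro i
    have hA : (0:ℝ) < (a i)^2 := by have := hapos i; positivity
    have d1 : (0:ℝ) < (a i)^2 + 2*(b*θ) := by positivity
    have d2 : (0:ℝ) < (a i)^2 + 2*(c*θ) := by positivity
    have hle : 1/((a i)^2+2*(c*θ)) ≤ 1/((a i)^2+2*(b*θ)) := by
      apply one_div_le_one_div_of_le d1; nlinarith
    nlinarith
  have hst : Summable (fun i => θ * (1/((a i)^2+2*(b*θ)) - 1/((a i)^2+2*(c*θ)))) :=
    (hsb.sub hsc).mul_left θ
  have hle : ∑ i ∈ Finset.range N, θ * (1/((a i)^2+2*(b*θ)) - 1/((a i)^2+2*(c*θ)))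
      ≤ θ * (μ (b*θ) - μ (c*θ)) := by
    have h := Summable.sum_le_tsum (Finset.range N) (fun i _ => hdiff_nonneg i) hst
    rw [tsum_mul_left, Summable.tsum_sub hsb hsc] at h
    rw [hμ (b*θ), hμ (c*θ)]
    exact h
  linarith [hθ1, hle]

lemma tendsto_thetaMu {a : ℕ → ℝ} (hapos : ∀ i, 0 < a i)
    (hasum : Summable (fun i => 1 / (a i) ^ 2)) {μ : ℝ → ℝ}
    (hμ : ∀ θ : ℝ, μ θ = ∑' i : ℕ, 1 / ((a i) ^ 2 + 2 * θ)) :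
    Tendsto (fun θ : ℝ => θ * μ θ) atTop atTop := by
  have h := tendsto_L hapos hasum hμ (b := 1) (c := 2) one_pos one_lt_two
  apply tendsto_atTop_mono' atTop _ h
  filter_upwards [eventually_gt_atTop (0:ℝ)] with θ hθ
  have h2θ : (0:ℝ) ≤ 2*θ := by linarith
  have hμ2 : 0 ≤ μ (2*θ) := by
    rw [hμ]
    apply tsum_nonneg
    intro i
    have hA : (0:ℝ) < (a i)^2 := by have := hapos i; positivity
    positivity
  have h1θ : μ (1*θ) = μ θ := by norm_num
  rw [h1θ]
  nlinarith

end ExpIDiffAux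

open ExpIDiffAux
/-- Let `(aᵢ)` be nondecreasing positive with `Σᵢ 1/aᵢ² < ∞`,
`μ θ = Σᵢ 1/(aᵢ²+2θ)`, `I θ = ½ Σᵢ log (1 + 2θ/aᵢ²) - θ * μ θ`, `μ⁻¹` the inverse of
`μ` (defined near `0⁺`) and `ρ s = 1/μ⁻¹ s`.  Then for every `x ∈ ℝ`,
`exp (I (μ⁻¹ s) - I (μ⁻¹ (s + x * ρ s)) - x) → 1` as `s → 0⁺`. -/
theorem exp_I_difference_tendsto_one (a : ℕ → ℝ) (hapos : ∀ i, 0 < a i)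
    (hamono : Monotone a) (hasum : Summable (fun i => 1 / (a i) ^ 2))
    (μ I μInv : ℝ → ℝ)
    (hμ : ∀ θ : ℝ, μ θ = ∑' i : ℕ, 1 / ((a i) ^ 2 + 2 * θ))
    (hI : ∀ θ : ℝ, I θ =
      (1 / 2) * (∑' i : ℕ, Real.log (1 + 2 * θ / (a i) ^ 2)) - θ * μ θ)
    (hμInv : ∀ᶠ s in nhdsWithin (0 : ℝ) (Set.Ioi 0), 0 < μInv s ∧ μ (μInv s) = s) :
    ∀ x : ℝ,
      Tendsto
        (fun s => Real.exp (I (μInv s) - I (μInv (s + x * (1 / μInv s))) - x))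
        (nhdsWithin 0 (Set.Ioi 0)) (nhds 1) := by
  intro x
  set l : Filter ℝ := nhdsWithin (0 : ℝ) (Set.Ioi 0) with hl
  have hs_pos : ∀ᶠ s in l, (0:ℝ) < s := eventually_mem_nhdsWithin
  -- x = 0 case
  rcases eq_or_ne x 0 with rfl | hx
  · have heq : (fun s => Real.exp (I (μInv s) - I (μInv (s + 0 * (1 / μInv s))) - 0))
        = fun _ => (1:ℝ) := by
      funext s; simp
    rw [heq]
    exact tendsto_const_nhds
  -- μInv → ∞
  have htop : Tendsto μInv l atTop := by
    apply tendsto_atTop_mono' l (f₁ := fun s => (1/s - (a 0)^2)/2)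
    · filter_upwards [hμInv, hs_pos] with s h1 hs
      obtain ⟨hθpos, hμθ⟩ := h1
      have hterm : 1/((a 0)^2 + 2*(μInv s)) ≤ μ (μInv s) := by
        rw [hμ]
        exact Summable.le_tsum (summable_h hapos hasum hθpos.le) 0
          (fun i _ => by have := denom_pos hapos hθpos.le i; positivity)
      rw [hμθ] at hterm
      have hden := denom_pos hapos hθpos.le 0
      have h1s : 1/s ≤ (a 0)^2 + 2*(μInv s) := by
        rw [div_le_iff₀ hs]
        rw [div_le_iff₀ hden] at hterm
        nlinarith [hterm]
      linarith [h1s]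
    · have h1 : Tendsto (fun s : ℝ => 1/s) l atTop := by
        simpa [one_div] using tendsto_inv_nhdsGT_zero
      exact (tendsto_atTop_add_const_right l (-(a 0)^2) h1).atTop_div_const two_pos |>.congr
        (fun s => by ring)
  -- s * μInv s → ∞
  have hsθ : Tendsto (fun s => s * μInv s) l atTop := by
    have h := (tendsto_thetaMu hapos hasum hμ).comp htop
    apply h.congr'
    filter_upwards [hμInv] with s h1
    simp only [Function.comp]
    rw [h1.2]
    ring
  -- t s → 0 within Ioi 0
  have hx1θ : Tendsto (fun s => x * (1 / μInv s)) l (nhds 0) := by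
    have h := htop.inv_tendsto_atTop
    have h2 := h.const_mul x
    simpa [one_div] using h2
  have hid0 : Tendsto (fun s : ℝ => s) l (nhds 0) := tendsto_id.mono_right nhdsWithin_le_nhds
  have ht0 : Tendsto (fun s => s + x * (1 / μInv s)) l (nhds 0) := by
    simpa using hid0.add hx1θ
  have ht_pos : ∀ᶠ s in l, 0 < s + x * (1 / μInv s) := by
    filter_upwards [hsθ.eventually_ge_atTop (2*|x|+1), hs_pos, hμInv] with s h1 hs h2
    have hθpos := h2.1
    have habs : |x| * (1/μInv s) ≤ s/2 := by
      rw [mul_one_div, div_le_div_iff₀ hθpos two_pos]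
      nlinarith [abs_nonneg x]
    have hminus : -(s/2) ≤ x * (1/μInv s) := by
      have : -(|x| * (1/μInv s)) ≤ x * (1/μInv s) := by
        have := neg_abs_le (x * (1/μInv s))
        have heq2 : |x * (1/μInv s)| = |x| * (1/μInv s) := by
          rw [abs_mul, abs_of_pos (by positivity : (0:ℝ) < 1/μInv s)]
        linarith [heq2 ▸ this]
      linarith
    linarith
  have ht : Tendsto (fun s => s + x * (1 / μInv s)) l l :=
    tendsto_nhdsWithin_of_tendsto_nhds_of_eventually_within _ ht0 ht_pos
  have hInv2 := ht.eventually hμInv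
  -- main estimate
  suffices hE : Tendsto (fun s => I (μInv s) - I (μInv (s + x * (1 / μInv s))) - x) l (nhds 0) by
    have h := (Real.continuous_exp.tendsto 0).comp hE
    simpa [Function.comp_def] using h
  rw [Metric.tendsto_nhds]
  intro ε hε
  set δ : ℝ := min (1/2) (ε/(2*(|x|+1))) with hδdef
  have habs_pos : (0:ℝ) < |x| := abs_pos.mpr hx
  have hδpos : 0 < δ := by
    apply lt_min (by norm_num)
    positivity
  have hδhalf : δ ≤ 1/2 := min_le_left _ _
  have hδε : δ * |x| < ε := by
    have h2 : δ ≤ ε/(2*(|x|+1)) := min_le_right _ _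
    have h3 : δ * |x| ≤ ε/(2*(|x|+1)) * |x| := by nlinarith
    have h4 : ε/(2*(|x|+1)) * |x| < ε := by
      rw [div_mul_eq_mul_div, div_lt_iff₀ (by positivity)]
      nlinarith
    linarith
  have hb : (0:ℝ) < 1 - δ := by linarith
  have hEb := (tendsto_L hapos hasum hμ hb (by linarith : 1 - δ < 1)).comp htop
    |>.eventually_ge_atTop (|x|+1)
  have hEc := (tendsto_L hapos hasum hμ one_pos (by linarith : (1:ℝ) < 1 + δ)).comp htop
    |>.eventually_ge_atTop (|x|+1)
  filter_upwards [hμInv, hInv2, hEb, hEc, hs_pos] with s h1 h2 h3 h4 hs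
  obtain ⟨hθ1pos, hμθ1⟩ := h1
  obtain ⟨hθ2pos, hμθ2⟩ := h2
  set θ1 := μInv s
  set θ2 := μInv (s + x * (1 / μInv s))
  simp only [Function.comp] at h3 h4
  rw [one_mul, hμθ1] at h3 h4
  rw [Real.dist_eq, sub_zero]
  have hθ1ne : θ1 ≠ 0 := hθ1pos.ne'
  have hq : θ1 * (x * (1/θ1)) = x := by field_simp
  rcases hx.lt_or_gt with hxneg | hxpos
  · -- x < 0 : t < s, θ1 ≤ θ2 < (1+δ)θ1
    have habsx : |x| = -x := abs_of_neg hxneg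
    rw [habsx] at hδε h3 h4
    have hts : s + x * (1/θ1) < s := by
      have : x * (1/θ1) < 0 := mul_neg_of_neg_of_pos hxneg (by positivity)
      linarith
    have hθ12 : θ1 ≤ θ2 := by
      by_contra h
      push_neg at h
      have := mu_anti hapos hasum hμ hθ2pos h.le
      rw [hμθ1, hμθ2] at this
      linarith
    have hμc : μ ((1+δ)*θ1) < s + x * (1/θ1) := by
      nlinarith [h4, hθ1pos, hq]
    have hθ2c : θ2 < (1+δ)*θ1 := by
      by_contra h
      push_neg at h
      have := mu_anti hapos hasum hμ (by positivity) h
      rw [hμθ2] at this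
      linarith
    obtain ⟨hlow, hhigh⟩ := I_sandwich hapos hasum hμ hI hθ1pos hθ12
    rw [hμθ1, hμθ2] at hlow hhigh
    -- hlow : θ1 * (s - (s + x/θ1)) ≤ I θ2 - I θ1 ; hhigh : ... ≤ θ2 * (s - (s + x/θ1))
    have hkey1 : θ1 * (s - (s + x * (1/θ1))) = -x := by
      have : θ1 * (s - (s + x * (1/θ1))) = -(θ1 * (x * (1/θ1))) := by ring
      rw [this, hq]
    have hkey2 : θ2 * (s - (s + x * (1/θ1))) = θ2 * (-(x * (1/θ1))) := by ring
    rw [hkey1] at hlow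
    rw [hkey2] at hhigh
    have hbound : θ2 * (-(x * (1/θ1))) ≤ (1+δ) * (-x) := by
      have hpos : 0 < -(x * (1/θ1)) := by
        have : x * (1/θ1) < 0 := mul_neg_of_neg_of_pos hxneg (by positivity)
        linarith
      have := mul_le_mul_of_nonneg_right hθ2c.le hpos.le
      calc θ2 * (-(x * (1/θ1))) ≤ (1+δ)*θ1 * (-(x * (1/θ1))) := this
        _ = (1+δ) * (-x) := by
            have h7 : (1+δ)*θ1 * (-(x * (1/θ1))) = (1+δ) * (-(θ1 * (x * (1/θ1)))) := by ring
            rw [h7, hq]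
    rw [abs_lt]
    have hup : I θ1 - I θ2 ≤ x := by linarith
    have hdown : (1+δ)*x ≤ I θ1 - I θ2 := by nlinarith [hbound, hhigh]
    have hexp : (1+δ)*x = x + δ*x := by ring
    have hexp2 : δ * -x = -(δ*x) := by ring
    constructor
    · linarith
    · linarith
  · -- x > 0 : s < t, (1-δ)θ1 < θ2 ≤ θ1
    have habsx : |x| = x := abs_of_pos hxpos
    rw [habsx] at hδε h3 h4
    have hts : s < s + x * (1/θ1) := by
      have : 0 < x * (1/θ1) := by positivity
      linarith
    have hθ21 : θ2 ≤ θ1 := by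
      by_contra h
      push_neg at h
      have := mu_anti hapos hasum hμ hθ1pos h.le
      rw [hμθ1, hμθ2] at this
      linarith
    have hμb : s + x * (1/θ1) < μ ((1-δ)*θ1) := by
      nlinarith [h3, hθ1pos, hq]
    have hbθ2 : (1-δ)*θ1 < θ2 := by
      by_contra h
      push_neg at h
      have := mu_anti hapos hasum hμ hθ2pos h
      rw [hμθ2] at this
      linarith
    obtain ⟨hlow, hhigh⟩ := I_sandwich hapos hasum hμ hI hθ2pos hθ21
    rw [hμθ1, hμθ2] at hlow hhigh
    have hkey1 : θ1 * (s + x * (1/θ1) - s) = x := by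
      have : θ1 * (s + x * (1/θ1) - s) = θ1 * (x * (1/θ1)) := by ring
      rw [this, hq]
    have hkey2 : θ2 * (s + x * (1/θ1) - s) = θ2 * (x * (1/θ1)) := by ring
    rw [hkey1] at hhigh
    rw [hkey2] at hlow
    have hbound : (1-δ) * x ≤ θ2 * (x * (1/θ1)) := by
      have hpos : 0 < x * (1/θ1) := by positivity
      have := mul_le_mul_of_nonneg_right hbθ2.le hpos.le
      calc (1-δ) * x = (1-δ)*θ1 * (x * (1/θ1)) := by
            have h7 : (1-δ)*θ1 * (x * (1/θ1)) = (1-δ) * (θ1 * (x * (1/θ1))) := by ring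
            rw [h7, hq]
        _ ≤ θ2 * (x * (1/θ1)) := this
    rw [abs_lt]
    have hdown : (1-δ)*x ≤ I θ1 - I θ2 := by linarith
    have hexp : (1-δ)*x = x - δ*x := by ring
    constructor
    · linarith
    · linarith
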